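/- (Identifiability of Λ.) Let f : {1,…,p} → {1,…,k} be surjective. For t ∈ {1, 2}, let Λ_t be a p×k real matrix that is pure with factor map f, let C_t be a k×k real symmetric positive definite matrix with unit diagonal, and let D_t be a diagonal p×p real matrix with nonnegative diagonal entries. Assume for each t: (i) for every factor j whose fiber f⁻¹(j) is a singleton {i}, Λ_t has Λ_{ij} = 1 and D_t has D_{ii} = 0; (ii) for every factor j, the first indicator i = min f⁻¹(j) has positive loading Λ_{ij} > 0; (iii) every factor j that is independent of all other factors (i.e., (C_t)_{jr} = 0 for all r ≠ j) has either exactly one indicator or at least three indicators (|f⁻¹(j)| = 1 or |f⁻¹(j)| ≥ 3). If Λ₁C₁Λ₁ᵀ + D₁ = Λ₂C₂Λ₂ᵀ + D₂, then Λ₁ = Λ₂. -/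

import Mathlib

open Matrix

lemma pure_quad_aux {p k : ℕ} (f : Fin p → Fin k) (Λ : Matrix (Fin p) (Fin k) ℝ)
    (C : Matrix (Fin k) (Fin k) ℝ)
    (hpure : ∀ (i : Fin p) (j : Fin k), Λ i j ≠ 0 ↔ j = f i) (i i' : Fin p) :
    (Λ * C * Λᵀ) i i' = Λ i (f i) * C (f i) (f i') * Λ i' (f i') := by
  have hz : ∀ (a : Fin p) (b : Fin k), b ≠ f a → Λ a b = 0 := by
    intro a b h
    by_contra hne
    exact h ((hpure a b).mp hne)
  rw [Matrix.mul_apply,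
    Finset.sum_eq_single (f i')
      (fun b _ hb => by rw [Matrix.transpose_apply, hz i' b hb, mul_zero])
      (fun h => absurd (Finset.mem_univ _) h),
    Matrix.mul_apply,
    Finset.sum_eq_single (f i)
      (fun b _ hb => by rw [hz i b hb, zero_mul])
      (fun h => absurd (Finset.mem_univ _) h),
    Matrix.transpose_apply]

/-- **Identifiability of Λ.** Under the identifying conditions of
Statement 7, together with the requirement that every factor that is independent of
all other factors has either exactly one or at least three indicators, two pure
parameterizations implying the same covariance matrix `ΛCΛᵀ + D` have equal
loading matrices. -/
theorem factor_loadings_identifiable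
    {p k : ℕ} (f : Fin p → Fin k) (hf : Function.Surjective f)
    (Λ₁ Λ₂ : Matrix (Fin p) (Fin k) ℝ)
    (C₁ C₂ : Matrix (Fin k) (Fin k) ℝ)
    (D₁ D₂ : Matrix (Fin p) (Fin p) ℝ)
    (hpure₁ : ∀ (i : Fin p) (j : Fin k), Λ₁ i j ≠ 0 ↔ j = f i)
    (hpure₂ : ∀ (i : Fin p) (j : Fin k), Λ₂ i j ≠ 0 ↔ j = f i)
    (hC₁ : C₁.PosDef) (hC₂ : C₂.PosDef)
    (hC₁diag : ∀ j, C₁ j j = 1) (hC₂diag : ∀ j, C₂ j j = 1)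
    (hD₁ : D₁.IsDiag) (hD₂ : D₂.IsDiag)
    (hD₁nonneg : ∀ i, 0 ≤ D₁ i i) (hD₂nonneg : ∀ i, 0 ≤ D₂ i i)
    (hsingle₁ : ∀ (j : Fin k) (i : Fin p),
      Finset.univ.filter (fun i' => f i' = j) = {i} → Λ₁ i j = 1 ∧ D₁ i i = 0)
    (hsingle₂ : ∀ (j : Fin k) (i : Fin p),
      Finset.univ.filter (fun i' => f i' = j) = {i} → Λ₂ i j = 1 ∧ D₂ i i = 0)
    (hfirst₁ : ∀ (j : Fin k) (i : Fin p),
      f i = j → (∀ i', f i' = j → i ≤ i') → 0 < Λ₁ i j)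
    (hfirst₂ : ∀ (j : Fin k) (i : Fin p),
      f i = j → (∀ i', f i' = j → i ≤ i') → 0 < Λ₂ i j)
    (hindep₁ : ∀ j : Fin k, (∀ r, r ≠ j → C₁ j r = 0) →
      (Finset.univ.filter (fun i' => f i' = j)).card = 1 ∨
        3 ≤ (Finset.univ.filter (fun i' => f i' = j)).card)
    (hindep₂ : ∀ j : Fin k, (∀ r, r ≠ j → C₂ j r = 0) →
      (Finset.univ.filter (fun i' => f i' = j)).card = 1 ∨
        3 ≤ (Finset.univ.filter (fun i' => f i' = j)).card)
    (heq : Λ₁ * C₁ * Λ₁ᵀ + D₁ = Λ₂ * C₂ * Λ₂ᵀ + D₂) :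
    Λ₁ = Λ₂ := by
  -- nonvanishing of diagonal loadings
  have ha : ∀ i : Fin p, Λ₁ i (f i) ≠ 0 := fun i => (hpure₁ i (f i)).mpr rfl
  have hb : ∀ i : Fin p, Λ₂ i (f i) ≠ 0 := fun i => (hpure₂ i (f i)).mpr rfl
  -- key off-diagonal equation
  have key : ∀ i i' : Fin p, i ≠ i' →
      Λ₁ i (f i) * C₁ (f i) (f i') * Λ₁ i' (f i')
        = Λ₂ i (f i) * C₂ (f i) (f i') * Λ₂ i' (f i') := by
    intro i i' hne
    have h := congrFun (congrFun heq i) i'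
    simp only [Matrix.add_apply] at h
    rw [pure_quad_aux f Λ₁ C₁ hpure₁, pure_quad_aux f Λ₂ C₂ hpure₂,
      hD₁ hne, hD₂ hne] at h
    linarith
  -- main claim
  have main : ∀ i : Fin p, Λ₁ i (f i) = Λ₂ i (f i) := by
    intro i
    set j := f i with hj
    set T := Finset.univ.filter (fun i' => f i' = j) with hT
    have hiT : i ∈ T := by simp [hT]; exact hj.symm
    have hTne : T.Nonempty := ⟨i, hiT⟩
    set i₀ := T.min' hTne with hi₀
    have hi₀T : i₀ ∈ T := T.min'_mem hTne
    have hfi₀ : f i₀ = j := (Finset.mem_filter.mp hi₀T).2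
    have hmin : ∀ i', f i' = j → i₀ ≤ i' := by
      intro i' hi'
      exact T.min'_le i' (by simp [hT, hi'])
    have hpos₁ : 0 < Λ₁ i₀ j := hfirst₁ j i₀ hfi₀ hmin
    have hpos₂ : 0 < Λ₂ i₀ j := hfirst₂ j i₀ hfi₀ hmin
    -- same-factor product equation
    have keyj : ∀ a b : Fin p, a ≠ b → a ∈ T → b ∈ T →
        Λ₁ a j * Λ₁ b j = Λ₂ a j * Λ₂ b j := by
      intro a b hab haT hbT
      have hfa : f a = j := (Finset.mem_filter.mp haT).2
      have hfb : f b = j := (Finset.mem_filter.mp hbT).2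
      have e := key a b hab
      rw [hfa, hfb, hC₁diag, hC₂diag, mul_one, mul_one] at e
      exact e
    -- step 1 : squares agree at the first indicator
    have hsq : Λ₁ i₀ j ^ 2 = Λ₂ i₀ j ^ 2 := by
      rcases lt_or_ge T.card 2 with hc | hc
      · -- card = 1
        have hc1 : T.card = 1 := by
          have := Finset.card_pos.mpr hTne; omega
        obtain ⟨a, haT⟩ := Finset.card_eq_one.mp hc1
        have hia : i₀ = a := by
          have := hi₀T; rw [haT, Finset.mem_singleton] at this; exact this
        have hTs : T = {i₀} := by rw [haT, hia]
        obtain ⟨h1, _⟩ := hsingle₁ j i₀ (hT ▸ hTs)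
        obtain ⟨h2, _⟩ := hsingle₂ j i₀ (hT ▸ hTs)
        rw [h1, h2]
      rcases lt_or_ge T.card 3 with hc3 | hc3
      · -- card = 2 : use another correlated factor
        have hc2 : T.card = 2 := by omega
        have hnz : ∃ r, r ≠ j ∧ C₁ j r ≠ 0 := by
          by_contra hcon
          push_neg at hcon
          rcases hindep₁ j hcon with h1 | h1 <;> rw [← hT] at h1 <;> omega
        obtain ⟨r, hrj, hCr⟩ := hnz
        obtain ⟨i'', hfi''⟩ := hf r
        -- the second indicator of factor j
        have herase : (T.erase i₀).Nonempty := by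
          rw [← Finset.card_pos, Finset.card_erase_of_mem hi₀T]; omega
        obtain ⟨i', hi'⟩ := herase
        have hi'ne : i' ≠ i₀ := (Finset.mem_erase.mp hi').1
        have hi'T : i' ∈ T := (Finset.mem_erase.mp hi').2
        have hfi' : f i' = j := (Finset.mem_filter.mp hi'T).2
        have hi''T : i'' ∉ T := by
          simp only [hT, Finset.mem_filter, Finset.mem_univ, true_and]
          rw [hfi'']; exact hrj
        have h0ne : i₀ ≠ i'' := fun h => hi''T (h ▸ hi₀T)
        have h1ne : i' ≠ i'' := fun h => hi''T (h ▸ hi'T)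
        have e1 := key i₀ i'' h0ne
        have e2 := key i' i'' h1ne
        rw [hfi₀, hfi''] at e1
        rw [hfi', hfi''] at e2
        have e3 := keyj i₀ i' (Ne.symm hi'ne) hi₀T hi'T
        have hL : Λ₂ i' j * C₂ j r * Λ₂ i'' r ≠ 0 := by
          rw [← e2]
          exact mul_ne_zero (mul_ne_zero (hfi' ▸ ha i') hCr) (hfi'' ▸ ha i'')
        apply mul_right_cancel₀ hL
        linear_combination (Λ₁ i₀ j * Λ₁ i' j) * e1
          + (Λ₂ i₀ j * C₂ j r * Λ₂ i'' r) * e3 - (Λ₁ i₀ j)^2 * e2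
      · -- card ≥ 3 : two further indicators
        have herase : 1 < (T.erase i₀).card := by
          rw [Finset.card_erase_of_mem hi₀T]; omega
        obtain ⟨i', hi'e, i'', hi''e, hii⟩ := Finset.one_lt_card.mp herase
        have hi'ne : i' ≠ i₀ := (Finset.mem_erase.mp hi'e).1
        have hi''ne : i'' ≠ i₀ := (Finset.mem_erase.mp hi''e).1
        have hi'T : i' ∈ T := (Finset.mem_erase.mp hi'e).2
        have hi''T : i'' ∈ T := (Finset.mem_erase.mp hi''e).2
        have hfi' : f i' = j := (Finset.mem_filter.mp hi'T).2
        have hfi'' : f i'' = j := (Finset.mem_filter.mp hi''T).2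
        have e1 := keyj i₀ i' (Ne.symm hi'ne) hi₀T hi'T
        have e2 := keyj i₀ i'' (Ne.symm hi''ne) hi₀T hi''T
        have e3 := keyj i' i'' hii hi'T hi''T
        have hL : Λ₂ i' j * Λ₂ i'' j ≠ 0 := by
          rw [← e3]
          exact mul_ne_zero (hfi' ▸ ha i') (hfi'' ▸ ha i'')
        apply mul_right_cancel₀ hL
        linear_combination (Λ₁ i₀ j * Λ₁ i'' j) * e1
          + (Λ₂ i₀ j * Λ₂ i' j) * e2 - (Λ₁ i₀ j)^2 * e3
    -- step 2 : equality at the first indicator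
    have h0 : Λ₁ i₀ j = Λ₂ i₀ j := by
      have hfac : (Λ₁ i₀ j - Λ₂ i₀ j) * (Λ₁ i₀ j + Λ₂ i₀ j) = 0 := by
        linear_combination hsq
      rcases mul_eq_zero.mp hfac with h | h
      · linarith
      · linarith
    -- step 3 : propagate to i
    by_cases hii : i = i₀
    · rw [hii]; exact h0
    · have e := keyj i₀ i (fun h => hii h.symm) hi₀T hiT
      rw [h0] at e
      exact mul_left_cancel₀ (h0 ▸ (hfi₀ ▸ ha i₀)) e
  -- conclude
  ext i j
  by_cases hj : j = f i
  · subst hj; exact main i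
  · have h1 : Λ₁ i j = 0 := by
      by_contra h; exact hj ((hpure₁ i j).mp h)
    have h2 : Λ₂ i j = 0 := by
      by_contra h; exact hj ((hpure₂ i j).mp h)
    rw [h1, h2]
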